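/- Let Ω ⊂ ℝⁿ be a bounded domain and let u ∈ C²(Ω) ∩ C⁰(closure Ω) with u > 0 in Ω be such that A[u] is positive definite in Ω (i.e. the graph of u is locally strictly convex in ℍⁿ⁺¹). (i) If the function h(x) = u(x)√(1+|Du(x)|²) attains a local maximum at an interior point x₀ ∈ Ω, then Du(x₀) = 0, and hence h(x₀) = u(x₀) ≤ sup_Ω u. (ii) Consequently, if the supremum of h over the closure of Ω is attained at an interior point of Ω, then ν^{n+1} = 1/√(1+|Du|²) ≥ u/ sup_Ω u at every point of Ω. -/

import Mathlib

open scoped Topology NNReal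
open Filter Set

noncomputable section

/-- Euclidean `n`-space. -/
abbrev En (n : ℕ) := EuclideanSpace ℝ (Fin n)

/-- The positive cone `K⁺ₙ`. -/
def posCone (n : ℕ) : Set (Fin n → ℝ) := {l | ∀ i, 0 < l i}

/-- A curvature function on the positive cone. -/
structure IsCurvatureFunction (n : ℕ) (f : (Fin n → ℝ) → ℝ) : Prop where
  smooth : ContDiffOn ℝ (⊤ : ℕ∞) f (posCone n)
  symm : ∀ (g : Equiv.Perm (Fin n)) (l : Fin n → ℝ), f (l ∘ g) = f l
  pos : ∀ l ∈ posCone n, 0 < f l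
  zero_at_boundary : ∀ l₀ ∈ frontier (posCone n), Tendsto f (𝓝[posCone n] l₀) (𝓝 0)
  deriv_pos : ∀ l ∈ posCone n, ∀ i : Fin n, 0 < fderiv ℝ f l (Pi.single i 1)
  concave : ConcaveOn ℝ (posCone n) f
  normalized : f (fun _ => 1) = 1
  homog : ∀ t : ℝ, 0 ≤ t → ∀ l ∈ posCone n, f (t • l) = t * f l

variable {n : ℕ}

/-- Gradient `Du` (components). -/
def Dg (u : En n → ℝ) (x : En n) : Fin n → ℝ :=
  fun i => fderiv ℝ u x (EuclideanSpace.single i 1)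

/-- Hessian matrix `D²u`. -/
def Dh (u : En n → ℝ) (x : En n) : Matrix (Fin n) (Fin n) ℝ :=
  Matrix.of fun i j =>
    fderiv ℝ (fun y => fderiv ℝ u y (EuclideanSpace.single j 1)) x (EuclideanSpace.single i 1)

/-- `w = √(1+|Du|²)`. -/
def wG (u : En n → ℝ) (x : En n) : ℝ := Real.sqrt (1 + ∑ i, Dg u x i ^ 2)

/-- The matrix `γ = (γ^{ij})`, the inverse square root of `I + Du Duᵀ`. -/
def gammaM (u : En n → ℝ) (x : En n) : Matrix (Fin n) (Fin n) ℝ :=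
  1 - (wG u x * (1 + wG u x))⁻¹ • Matrix.of (fun i j => Dg u x i * Dg u x j)

/-- The matrix `A[u]` whose eigenvalues are the hyperbolic principal curvatures of
the graph of `u`. -/
def hypA (u : En n → ℝ) (x : En n) : Matrix (Fin n) (Fin n) ℝ :=
  (wG u x)⁻¹ • (1 + u x • (gammaM u x * Dh u x * gammaM u x))

open Classical in
/-- Eigenvalues of a (symmetric) real matrix; junk value `0` if not symmetric. -/
def eigenvals {n : ℕ} (A : Matrix (Fin n) (Fin n) ℝ) : Fin n → ℝ :=
  if h : A.IsHermitian then h.eigenvalues else 0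

/-- A solution of the asymptotic Plateau problem `f(κ) = σ` over `Ω`. -/
structure IsAPSolution (n : ℕ) (f : (Fin n → ℝ) → ℝ) (Ω : Set (En n)) (σ : ℝ)
    (u : En n → ℝ) : Prop where
  smooth : ContDiffOn ℝ (⊤ : ℕ∞) u Ω
  cont : ContinuousOn u (closure Ω)
  pos : ∀ x ∈ Ω, 0 < u x
  bd : ∀ x ∈ frontier Ω, u x = 0
  posdef : ∀ x ∈ Ω, (hypA u x).PosDef
  curv_eq : ∀ x ∈ Ω, f (eigenvals (hypA u x)) = σ

section Extras

variable {n : ℕ}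

/-- Uniform exterior ball condition with radius `r`. -/
def UnifExtBall (Ω : Set (En n)) (r : ℝ) : Prop :=
  ∀ p ∈ frontier Ω, ∃ c : En n, Metric.ball c r ∩ Ω = ∅ ∧ dist p c = r

/-- Uniform interior ball condition with radius `r`. -/
def UnifIntBall (Ω : Set (En n)) (r : ℝ) : Prop :=
  ∀ p ∈ frontier Ω, ∃ c : En n, Metric.ball c r ⊆ Ω ∧ dist p c = r

/-- `ν` is the outward unit normal to `∂Ω` at `p`: near `p`, after writing points as
`p + v + tν` with `v` in the tangent hyperplane, `Ω` is the region `t < -φ(v)` for a `C¹`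
function `φ` with `φ(0) = 0`, `Dφ(0) = 0`. -/
def IsOutwardNormalAt (Ω : Set (En n)) (p ν : En n) : Prop :=
  ‖ν‖ = 1 ∧ ∃ r : ℝ, 0 < r ∧ ∃ φ : ↥((Submodule.span ℝ {ν})ᗮ) → ℝ,
    φ 0 = 0 ∧ fderiv ℝ φ 0 = 0 ∧ ContDiffOn ℝ 1 φ (Metric.ball 0 r) ∧
    ∀ y ∈ Metric.ball p r,
      (y ∈ Ω ↔ @inner ℝ _ _ (y - p) ν
          < - φ ((Submodule.orthogonalProjectionOnto ((Submodule.span ℝ {ν})ᗮ)) (y - p)))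

/-- `Ω` has `C¹` boundary. -/
def HasC1Boundary (Ω : Set (En n)) : Prop :=
  ∀ p ∈ frontier Ω, ∃ ν : En n, IsOutwardNormalAt Ω p ν

/-- `Ω` has `C²` boundary: near every boundary point `p`, `Ω` is the region above the graph
of a `C²` function `φ` over the tangent hyperplane, where `ν` is the interior unit normal. -/
def HasC2Boundary (Ω : Set (En n)) : Prop :=
  ∀ p ∈ frontier Ω, ∃ ν : En n, ‖ν‖ = 1 ∧ ∃ r : ℝ, 0 < r ∧
    ∃ φ : ↥((Submodule.span ℝ {ν})ᗮ) → ℝ,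
      φ 0 = 0 ∧ fderiv ℝ φ 0 = 0 ∧ ContDiffOn ℝ 2 φ (Metric.ball 0 r) ∧
      ∀ y ∈ Metric.ball p r,
        (y ∈ Ω ↔ φ ((Submodule.orthogonalProjectionOnto ((Submodule.span ℝ {ν})ᗮ)) (y - p))
            < @inner ℝ _ _ (y - p) ν)

/-- `Ω` has `C^{2,α}` boundary: as `HasC2Boundary`, and additionally the second derivative of
the graph function is Hölder continuous of some exponent `α ∈ (0,1]`. -/
def HasC2alphaBoundary (Ω : Set (En n)) : Prop :=
  ∀ p ∈ frontier Ω, ∃ ν : En n, ‖ν‖ = 1 ∧ ∃ r : ℝ, 0 < r ∧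
    ∃ φ : ↥((Submodule.span ℝ {ν})ᗮ) → ℝ,
      φ 0 = 0 ∧ fderiv ℝ φ 0 = 0 ∧ ContDiffOn ℝ 2 φ (Metric.ball 0 r) ∧
      (∃ α C : ℝ≥0, 0 < α ∧ α ≤ 1 ∧
        letI : NormedAddCommGroup (↥((Submodule.span ℝ {ν})ᗮ) →L[ℝ] ↥((Submodule.span ℝ {ν})ᗮ) →L[ℝ] ℝ) :=
          @ContinuousLinearMap.toNormedAddCommGroup ℝ ℝ ↥((Submodule.span ℝ {ν})ᗮ)
            (↥((Submodule.span ℝ {ν})ᗮ) →L[ℝ] ℝ) _ _ _ _ _ _ (RingHom.id ℝ) _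
        HolderOnWith C α (fun v => fderiv ℝ (fun z => fderiv ℝ φ z) v) (Metric.ball 0 r)) ∧
      ∀ y ∈ Metric.ball p r,
        (y ∈ Ω ↔ φ ((Submodule.orthogonalProjectionOnto ((Submodule.span ℝ {ν})ᗮ)) (y - p))
            < @inner ℝ _ _ (y - p) ν)

/-- `Ω` is a mean convex domain with `C^{2,α}` boundary: near every boundary point, `Ω` is the
region above the graph of a `C^{2,α}` function `φ` over the tangent hyperplane (`ν` being the
interior unit normal, `Dφ(0) = 0`), with `Δφ(0) ≥ 0`. -/
def IsMeanConvexC2alphaDomain (Ω : Set (En n)) : Prop :=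
  ∀ p ∈ frontier Ω, ∃ ν : En n, ‖ν‖ = 1 ∧ ∃ r : ℝ, 0 < r ∧
    ∃ φ : ↥((Submodule.span ℝ {ν})ᗮ) → ℝ,
      φ 0 = 0 ∧ fderiv ℝ φ 0 = 0 ∧ ContDiffOn ℝ 2 φ (Metric.ball 0 r) ∧
      (∃ α C : ℝ≥0, 0 < α ∧ α ≤ 1 ∧
        letI : NormedAddCommGroup (↥((Submodule.span ℝ {ν})ᗮ) →L[ℝ] ↥((Submodule.span ℝ {ν})ᗮ) →L[ℝ] ℝ) :=
          @ContinuousLinearMap.toNormedAddCommGroup ℝ ℝ ↥((Submodule.span ℝ {ν})ᗮ)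
            (↥((Submodule.span ℝ {ν})ᗮ) →L[ℝ] ℝ) _ _ _ _ _ _ (RingHom.id ℝ) _
        HolderOnWith C α (fun v => fderiv ℝ (fun z => fderiv ℝ φ z) v) (Metric.ball 0 r)) ∧
      (∀ y ∈ Metric.ball p r,
        (y ∈ Ω ↔ φ ((Submodule.orthogonalProjectionOnto ((Submodule.span ℝ {ν})ᗮ)) (y - p))
            < @inner ℝ _ _ (y - p) ν)) ∧
      (∃ b : OrthonormalBasis (Fin (n - 1)) ℝ ↥((Submodule.span ℝ {ν})ᗮ),
        0 ≤ ∑ i, fderiv ℝ (fun z => fderiv ℝ φ z (b i)) 0 (b i))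

/-- Gradient with respect to a set (`fderivWithin`), used for derivatives up to the boundary. -/
def DgW (s : Set (En n)) (u : En n → ℝ) (x : En n) : Fin n → ℝ :=
  fun i => fderivWithin ℝ u s x (EuclideanSpace.single i 1)

end Extras
section DeSitter

variable {n : ℕ}

/-- `w = √(1−|Dv|²)` for a spacelike graph. -/
def wDS (v : En n → ℝ) (x : En n) : ℝ := Real.sqrt (1 - ∑ i, Dg v x i ^ 2)

/-- The matrix `Dv Dvᵀ`. -/
def dyad (v : En n → ℝ) (x : En n) : Matrix (Fin n) (Fin n) ℝ :=
  Matrix.of fun i j => Dg v x i * Dg v x j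

/-- Induced (de Sitter) metric of the spacelike graph of `v`. -/
def gDS (v : En n → ℝ) (x : En n) : Matrix (Fin n) (Fin n) ℝ :=
  (v x ^ 2)⁻¹ • (1 - dyad v x)

/-- Second fundamental form of the spacelike graph of `v`. -/
def hDS (v : En n → ℝ) (x : En n) : Matrix (Fin n) (Fin n) ℝ :=
  (v x ^ 2 * wDS v x)⁻¹ • (1 - dyad v x - v x • Dh v x)

open Classical in
/-- `g^{-1/2} h g^{-1/2}`, whose eigenvalues are the de Sitter principal curvatures
of the spacelike graph of `v` (junk value `0` if `g` is not positive semidefinite). -/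
def ADS (v : En n → ℝ) (x : En n) : Matrix (Fin n) (Fin n) ℝ :=
  if hg : (gDS v x).PosSemidef then
    (hg.1.eigenvectorUnitary.1 * Matrix.diagonal (Real.sqrt ∘ hg.1.eigenvalues) *
      (star hg.1.eigenvectorUnitary : Matrix (Fin n) (Fin n) ℝ))⁻¹ * hDS v x *
    (hg.1.eigenvectorUnitary.1 * Matrix.diagonal (Real.sqrt ∘ hg.1.eigenvalues) *
      (star hg.1.eigenvectorUnitary : Matrix (Fin n) (Fin n) ℝ))⁻¹ else 0

/-- The normalized `k`-th elementary symmetric function `H_k = e_k / C(n,k)`. -/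
def Hk (n k : ℕ) (l : Fin n → ℝ) : ℝ :=
  (∑ s ∈ Finset.powersetCard k (Finset.univ : Finset (Fin n)), ∏ i ∈ s, l i) / (n.choose k)

end DeSitter
end

section AuxProofs

open Matrix

variable {n : ℕ}

lemma clm_eval (L : En n →L[ℝ] ℝ) (v : En n) :
    L v = ∑ j, v j * L (EuclideanSpace.single j 1) := by
  have hv : v = ∑ j, v j • (EuclideanSpace.single j 1 : En n) := by
    have h := (EuclideanSpace.basisFun (Fin n) ℝ).sum_repr v
    simp only [EuclideanSpace.basisFun_apply, EuclideanSpace.basisFun_repr] at h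
    exact h.symm
  conv_lhs => rw [hv]
  rw [map_sum]
  simp [smul_eq_mul]

lemma wG_pos (u : En n → ℝ) (x : En n) : 0 < wG u x := by
  have : 0 ≤ ∑ i, Dg u x i ^ 2 := Finset.sum_nonneg fun i _ => sq_nonneg _
  exact Real.sqrt_pos.2 (by linarith)

lemma gamma_mulVec (u : En n → ℝ) (x : En n) :
    gammaM u x *ᵥ Dg u x = (wG u x)⁻¹ • Dg u x := by
  set g := Dg u x with hg
  set w := wG u x with hw
  set G := ∑ i, g i ^ 2 with hGdef
  have hG : 0 ≤ G := Finset.sum_nonneg fun i _ => sq_nonneg _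
  have hw0 : 0 < w := wG_pos u x
  have hw2 : w ^ 2 = 1 + G := Real.sq_sqrt (by linarith)
  have hP : (Matrix.of fun i j => g i * g j) *ᵥ g = G • g := by
    funext i
    simp only [Matrix.mulVec, dotProduct, Matrix.of_apply, Pi.smul_apply, smul_eq_mul,
      hGdef, Finset.sum_mul]
    exact Finset.sum_congr rfl fun j _ => by ring
  have hs : 1 - (w * (1 + w))⁻¹ * G = w⁻¹ := by
    have hG' : G = w ^ 2 - 1 := by linarith
    rw [hG']
    field_simp
    ring
  rw [gammaM, Matrix.sub_mulVec, Matrix.one_mulVec, Matrix.smul_mulVec, hP]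
  funext i
  simp only [Pi.sub_apply, Pi.smul_apply, smul_eq_mul]
  calc g i - (w * (1 + w))⁻¹ * (G * g i) = (1 - (w * (1 + w))⁻¹ * G) * g i := by ring
    _ = w⁻¹ * g i := by rw [hs]

lemma gamma_symm (u : En n → ℝ) (x : En n) : (gammaM u x)ᵀ = gammaM u x := by
  unfold gammaM
  rw [Matrix.transpose_sub, Matrix.transpose_one, Matrix.transpose_smul]
  congr 1
  congr 1
  ext i j
  simp [Matrix.transpose_apply, mul_comm]

lemma quad_hypA (u : En n → ℝ) (x : En n) :
    star (Dg u x) ⬝ᵥ (hypA u x *ᵥ Dg u x) =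
      (wG u x)⁻¹ * ((∑ i, Dg u x i ^ 2)
        + u x * ((wG u x)⁻¹ * ((wG u x)⁻¹ * (Dg u x ⬝ᵥ (Dh u x *ᵥ Dg u x))))) := by
  set g := Dg u x with hg
  set w := wG u x with hw
  have hstar : star g = g := by funext i; simp
  have hGdot : g ⬝ᵥ g = ∑ i, g i ^ 2 := by
    simp [dotProduct, sq]
  have hM : (gammaM u x * Dh u x * gammaM u x) *ᵥ g
      = w⁻¹ • (gammaM u x *ᵥ (Dh u x *ᵥ g)) := by
    rw [← Matrix.mulVec_mulVec, ← Matrix.mulVec_mulVec, gamma_mulVec, Matrix.mulVec_smul,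
      Matrix.mulVec_smul]
  have h1 : hypA u x *ᵥ g
      = w⁻¹ • (g + u x • (w⁻¹ • (gammaM u x *ᵥ (Dh u x *ᵥ g)))) := by
    rw [hypA, Matrix.smul_mulVec, Matrix.add_mulVec, Matrix.one_mulVec,
      Matrix.smul_mulVec, hM]
  rw [hstar, h1]
  rw [dotProduct_smul, dotProduct_add, dotProduct_smul,
    dotProduct_smul]
  have h2 : g ⬝ᵥ (gammaM u x *ᵥ (Dh u x *ᵥ g)) = w⁻¹ * (g ⬝ᵥ (Dh u x *ᵥ g)) := by
    rw [dotProduct_mulVec, ← Matrix.mulVec_transpose, gamma_symm, gamma_mulVec,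
      smul_dotProduct]
    simp [smul_eq_mul]
    rfl
  rw [h2, hGdot]
  simp only [smul_eq_mul]

lemma derivEqAux (u : En n → ℝ) (x₀ : En n) (hcu : ContDiffAt ℝ 2 u x₀)
    (hmax : fderiv ℝ (fun x => u x * wG u x) x₀ = 0) :
    (∑ i, Dg u x₀ i ^ 2) * wG u x₀
      + u x₀ * ((wG u x₀)⁻¹ * (Dg u x₀ ⬝ᵥ (Dh u x₀ *ᵥ Dg u x₀))) = 0 := by
  set e : Fin n → En n := fun i => EuclideanSpace.single i 1 with he
  set p : Fin n → En n → ℝ := fun i x => fderiv ℝ u x (e i) with hp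
  set L : Fin n → (En n →L[ℝ] ℝ) := fun i => fderiv ℝ (p i) x₀ with hL
  have hud : DifferentiableAt ℝ u x₀ := hcu.differentiableAt (by norm_num)
  have hdf : DifferentiableAt ℝ (fderiv ℝ u) x₀ :=
    (hcu.fderiv_right (m := 1) (by norm_num)).differentiableAt one_ne_zero
  have hpd : ∀ i, DifferentiableAt ℝ (p i) x₀ := fun i =>
    ((ContinuousLinearMap.apply ℝ ℝ (e i)).differentiableAt).comp x₀ hdf
  have hpF : ∀ i, HasFDerivAt (p i) (L i) x₀ := fun i => (hpd i).hasFDerivAt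
  set LF : En n →L[ℝ] ℝ := ∑ i, (2 * p i x₀) • L i with hLF
  have hsqF : ∀ i, HasFDerivAt (fun x => (p i x) ^ 2) ((2 * p i x₀) • L i) x₀ := by
    intro i
    have h := (hpF i).mul (hpF i)
    simp only [← pow_two] at h
    have h2 : (2 * p i x₀) • L i = p i x₀ • L i + p i x₀ • L i := by
      rw [two_mul, add_smul]
    rw [h2]
    exact h
  have hFd : HasFDerivAt (fun x => 1 + ∑ i, (p i x) ^ 2) LF x₀ :=
    (HasFDerivAt.fun_sum (fun i _ => hsqF i)).const_add 1
  set Fx : ℝ := 1 + ∑ i, (p i x₀) ^ 2 with hFx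
  have hF0 : 0 < Fx := by
    have : 0 ≤ ∑ i, (p i x₀) ^ 2 := Finset.sum_nonneg fun i _ => sq_nonneg _
    linarith
  have hsq : HasDerivAt Real.sqrt (1 / (2 * Real.sqrt Fx)) Fx :=
    Real.hasDerivAt_sqrt (ne_of_gt hF0)
  have hwd : HasFDerivAt (fun x => Real.sqrt (1 + ∑ i, (p i x) ^ 2))
      ((1 / (2 * Real.sqrt Fx)) • LF) x₀ := hsq.comp_hasFDerivAt x₀ hFd
  have hh : HasFDerivAt (fun x => u x * Real.sqrt (1 + ∑ i, (p i x) ^ 2))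
      (u x₀ • ((1 / (2 * Real.sqrt Fx)) • LF) + Real.sqrt (1 + ∑ i, (p i x₀) ^ 2) • fderiv ℝ u x₀)
      x₀ := hud.hasFDerivAt.mul hwd
  have hfd0 : (u x₀ • ((1 / (2 * Real.sqrt Fx)) • LF)
      + Real.sqrt (1 + ∑ i, (p i x₀) ^ 2) • fderiv ℝ u x₀) = 0 := by
    rw [← hh.fderiv]
    exact hmax
  set g : Fin n → ℝ := Dg u x₀ with hg
  set v : En n := (WithLp.equiv 2 (Fin n → ℝ)).symm g with hv
  have hvj : ∀ j, v j = g j := fun j => rfl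
  have hgp : ∀ i, p i x₀ = g i := fun i => rfl
  have hLe : ∀ i j, L i (e j) = Dh u x₀ j i := fun i j => rfl
  have hev := congrFun (congrArg (fun (T : En n →L[ℝ] ℝ) => (T : En n → ℝ)) hfd0) v
  simp only [ContinuousLinearMap.add_apply, ContinuousLinearMap.coe_smul', Pi.smul_apply,
    ContinuousLinearMap.zero_apply, smul_eq_mul] at hev
  have hu_v : fderiv ℝ u x₀ v = ∑ j, g j ^ 2 := by
    rw [clm_eval]
    exact Finset.sum_congr rfl fun j _ => by rw [hvj j, sq]; rfl
  have hL_v : ∀ i, L i v = ∑ j, g j * Dh u x₀ j i := by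
    intro i
    rw [clm_eval]
    exact Finset.sum_congr rfl fun j _ => by rw [hvj j, hLe i j]
  have hLF_v : LF v = 2 * (g ⬝ᵥ (Dh u x₀ *ᵥ g)) := by
    rw [hLF]
    rw [ContinuousLinearMap.sum_apply]
    simp only [ContinuousLinearMap.coe_smul', Pi.smul_apply, smul_eq_mul, hL_v, hgp]
    rw [dotProduct]
    simp only [Matrix.mulVec, dotProduct, Finset.mul_sum]
    rw [Finset.sum_comm]
    exact Finset.sum_congr rfl fun j _ => Finset.sum_congr rfl fun i _ => by ring
  rw [hu_v, hLF_v] at hev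
  have hwFx : wG u x₀ = Real.sqrt Fx := rfl
  have hsq0 : 0 < Real.sqrt Fx := Real.sqrt_pos.2 hF0
  rw [hwFx]
  have hG : (∑ i, Dg u x₀ i ^ 2) = ∑ j, g j ^ 2 := rfl
  rw [hG]
  have hQ : Dg u x₀ ⬝ᵥ (Dh u x₀ *ᵥ Dg u x₀) = g ⬝ᵥ (Dh u x₀ *ᵥ g) := rfl
  rw [hQ]
  have h2 : u x₀ * (1 / (2 * Real.sqrt Fx) * (2 * (g ⬝ᵥ (Dh u x₀ *ᵥ g))))
      = u x₀ * ((Real.sqrt Fx)⁻¹ * (g ⬝ᵥ (Dh u x₀ *ᵥ g))) := by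
    field_simp
  rw [h2] at hev
  linarith

lemma grad_zero (u : En n → ℝ) (x₀ : En n) (hcu : ContDiffAt ℝ 2 u x₀)
    (hpd : (hypA u x₀).PosDef)
    (hmax : IsLocalMax (fun x => u x * wG u x) x₀) : ∀ i, Dg u x₀ i = 0 := by
  by_contra hne
  push_neg at hne
  obtain ⟨i, hi⟩ := hne
  have hgne : Dg u x₀ ≠ 0 := fun h => hi (congrFun h i)
  have hE := derivEqAux u x₀ hcu hmax.fderiv_eq_zero
  have hPD := hpd.dotProduct_mulVec_pos hgne
  rw [quad_hypA] at hPD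
  set w := wG u x₀ with hw
  set G := ∑ i, Dg u x₀ i ^ 2 with hG
  set Q := Dg u x₀ ⬝ᵥ (Dh u x₀ *ᵥ Dg u x₀) with hQ
  have hw0 : 0 < w := wG_pos u x₀
  have hww : w * w⁻¹ = 1 := mul_inv_cancel₀ hw0.ne'
  have e1 : w ^ 2 * G + u x₀ * Q = 0 := by
    linear_combination w * hE - (u x₀ * Q) * hww
  have e2 : 0 < w⁻¹ ^ 3 * (w ^ 2 * G + u x₀ * Q) := by
    have heq : w⁻¹ * (G + u x₀ * (w⁻¹ * (w⁻¹ * Q)))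
        = w⁻¹ ^ 3 * (w ^ 2 * G + u x₀ * Q) := by
      linear_combination (-(G * w⁻¹ * (1 + w * w⁻¹))) * hww
    rw [← heq]
    exact hPD
  rw [e1, mul_zero] at e2
  exact lt_irrefl 0 e2

end AuxProofs

/-- **Proposition 2.2**: for a locally strictly convex graph, (i) at an interior local maximum
`x₀` of `h = u√(1+|Du|²)` one has `Du(x₀) = 0`, hence `h(x₀) = u(x₀) ≤ sup_Ω u`; (ii) if the
supremum of `h` is attained at an interior point, then `ν^{n+1} ≥ u / sup_Ω u` throughout. -/
theorem stmt_12 (n : ℕ)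
    (Ω : Set (En n)) (hΩo : IsOpen Ω) (hΩconn : IsConnected Ω)
    (hΩb : Bornology.IsBounded Ω)
    (u : En n → ℝ) (hu2 : ContDiffOn ℝ 2 u Ω) (huc : ContinuousOn u (closure Ω))
    (hupos : ∀ x ∈ Ω, 0 < u x) (hupd : ∀ x ∈ Ω, (hypA u x).PosDef) :
    (∀ x₀ ∈ Ω, IsLocalMax (fun x => u x * wG u x) x₀ →
      (∀ i, Dg u x₀ i = 0) ∧ u x₀ * wG u x₀ = u x₀ ∧ u x₀ ≤ sSup (u '' Ω)) ∧
    ((∃ x₀ ∈ Ω, ∀ y ∈ Ω, u y * wG u y ≤ u x₀ * wG u x₀) →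
      ∀ x ∈ Ω, u x / sSup (u '' Ω) ≤ (wG u x)⁻¹) := by
  have hbdd : BddAbove (u '' Ω) := by
    have hc : IsCompact (closure Ω) := hΩb.isCompact_closure
    have := (hc.image_of_continuousOn huc).bddAbove
    exact this.mono (image_mono subset_closure)
  have hSup : ∀ x ∈ Ω, u x ≤ sSup (u '' Ω) := fun x hx => le_csSup hbdd ⟨x, hx, rfl⟩
  have hpart1 : ∀ x₀ ∈ Ω, IsLocalMax (fun x => u x * wG u x) x₀ →
      (∀ i, Dg u x₀ i = 0) ∧ u x₀ * wG u x₀ = u x₀ ∧ u x₀ ≤ sSup (u '' Ω) := by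
    intro x₀ hx₀ hmax
    have hcu : ContDiffAt ℝ 2 u x₀ := hu2.contDiffAt (hΩo.mem_nhds hx₀)
    have hkey : ∀ i, Dg u x₀ i = 0 := grad_zero u x₀ hcu (hupd x₀ hx₀) hmax
    refine ⟨hkey, ?_, hSup x₀ hx₀⟩
    have hw1 : wG u x₀ = 1 := by
      unfold wG
      simp [hkey]
    rw [hw1, mul_one]
  refine ⟨hpart1, ?_⟩
  rintro ⟨x₀, hx₀, hglob⟩ x hx
  have hmax : IsLocalMax (fun x => u x * wG u x) x₀ := by
    filter_upwards [hΩo.mem_nhds hx₀] with y hy using hglob y hy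
  obtain ⟨hkey, heq, hle⟩ := hpart1 x₀ hx₀ hmax
  have hS0 : 0 < sSup (u '' Ω) := lt_of_lt_of_le (hupos x₀ hx₀) hle
  have hwx : 0 < wG u x := wG_pos u x
  have hx2 : u x * wG u x ≤ sSup (u '' Ω) := by
    calc u x * wG u x ≤ u x₀ * wG u x₀ := hglob x hx
      _ = u x₀ := heq
      _ ≤ sSup (u '' Ω) := hle
  rw [inv_eq_one_div, div_le_div_iff₀ hS0 hwx]
  linarith
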